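/- arXiv:1907.01786 — 4 statements merged into one kernel-verified Lean document; each statement's English description precedes it below -/
import Mathlib

section
/- For every real number T > 0, one has T·(sinh(T) − 2·sinh(T/2)) ≤ (3/2)·(T·sinh(T) − 2·(cosh(T) − 1)). -/
lemma mono_from_deriv (f f' : ℝ → ℝ) (hd : ∀ y, HasDerivAt f (f' y) y)
    (hpos : ∀ y, 0 < y → 0 ≤ f' y) (hf0 : f 0 = 0) (x : ℝ) (hx : 0 ≤ x) :
    0 ≤ f x := by
  have hdiff : Differentiable ℝ f := fun y => (hd y).differentiableAt
  have hm : MonotoneOn f (Set.Ici 0) := by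
    apply monotoneOn_of_deriv_nonneg (convex_Ici 0) hdiff.continuous.continuousOn
      (hdiff.differentiableOn)
    intro y hy
    rw [interior_Ici] at hy
    rw [(hd y).deriv]
    exact hpos y hy
  have := hm (Set.self_mem_Ici) (Set.mem_Ici.mpr hx) hx
  rwa [hf0] at this

lemma my_sinh_nonneg (y : ℝ) (hy : 0 ≤ y) : 0 ≤ Real.sinh y := by
  exact Real.sinh_nonneg_iff.mpr hy

lemma aux1 (x : ℝ) (hx : 0 ≤ x) : 0 ≤ x * Real.cosh x - Real.sinh x := by
  apply mono_from_deriv _ (fun y => y * Real.sinh y) _ _ (by simp) x hx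
  · intro y
    have h1 : HasDerivAt (fun y : ℝ => y * Real.cosh y)
        (1 * Real.cosh y + y * Real.sinh y) y :=
      (hasDerivAt_id y).mul (Real.hasDerivAt_cosh y)
    have := h1.sub (Real.hasDerivAt_sinh y)
    exact this.congr_deriv (by ring)
  · intro y hy
    exact mul_nonneg hy.le (my_sinh_nonneg y hy.le)

lemma aux2 (x : ℝ) (hx : 0 ≤ x) : 0 ≤ x * Real.sinh x + 2 - 2 * Real.cosh x := by
  apply mono_from_deriv _ (fun y => y * Real.cosh y - Real.sinh y) _ _ (by simp) x hx
  · intro y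
    have h1 : HasDerivAt (fun y : ℝ => y * Real.sinh y)
        (1 * Real.sinh y + y * Real.cosh y) y :=
      (hasDerivAt_id y).mul (Real.hasDerivAt_sinh y)
    have h2 := (h1.add_const 2).sub ((Real.hasDerivAt_cosh y).const_mul 2)
    exact h2.congr_deriv (by ring)
  · intro y hy
    exact aux1 y hy.le

lemma aux3 (x : ℝ) (hx : 0 ≤ x) : 0 ≤ x * Real.cosh x + 2 * x - 3 * Real.sinh x := by
  apply mono_from_deriv _
    (fun y => y * Real.sinh y + 2 - 2 * Real.cosh y) _ _ (by simp) x hx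
  · intro y
    have h1 : HasDerivAt (fun y : ℝ => y * Real.cosh y)
        (1 * Real.cosh y + y * Real.sinh y) y :=
      (hasDerivAt_id y).mul (Real.hasDerivAt_cosh y)
    have h2 := (h1.add ((hasDerivAt_id y).const_mul 2)).sub
      ((Real.hasDerivAt_sinh y).const_mul 3)
    exact h2.congr_deriv (by ring)
  · intro y hy
    exact aux2 y hy.le

/-- Key analytic inequality: for every real `T > 0`,
`T * (sinh T - 2 * sinh (T/2)) ≤ (3/2) * (T * sinh T - 2 * (cosh T - 1))`. -/
theorem key_hyperbolic_inequality (T : ℝ) (hT : 0 < T) :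
    T * (Real.sinh T - 2 * Real.sinh (T / 2)) ≤
      (3 / 2) * (T * Real.sinh T - 2 * (Real.cosh T - 1)) := by
  set x := T / 2 with hx
  have hT2 : T = 2 * x := by rw [hx]; ring
  have hxpos : 0 < x := by positivity
  have hs : Real.sinh T = 2 * Real.sinh x * Real.cosh x := by
    rw [hT2, Real.sinh_two_mul]
  have hc : Real.cosh T = 2 * Real.cosh x ^ 2 - 1 := by
    rw [hT2, Real.cosh_two_mul]
    have := Real.cosh_sq_sub_sinh_sq x
    nlinarith [Real.cosh_sq_sub_sinh_sq x]
  have h3 := aux3 x hxpos.le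
  have hsn : 0 ≤ Real.sinh x := my_sinh_nonneg x hxpos.le
  have hcc : Real.cosh x ^ 2 = 1 + Real.sinh x ^ 2 := by
    have := Real.cosh_sq_sub_sinh_sq x; nlinarith
  rw [hs, hc, hT2]
  nlinarith [mul_nonneg hsn h3, sq_nonneg (Real.sinh x)]
end

section
/- For every real T > 0 and every t ∈ [0, T], one has cosh(t)·sinh(T) − sinh(t)·(cosh(T) − 1) > 0; consequently, for q̃ ≠ 0, the optimal control u*(t) = q̃·(sinh(t)·sinh(T) − cosh(t)·(cosh(T) − 1))/(2·(cosh(T) − 1) − T·sinh(T)) of the double-integrator problem is strictly monotone on [0, T]. -/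
open Real

/-- `sinh x < x * cosh x` for `x > 0`. -/
lemma aux_sinh_lt_mul_cosh {x : ℝ} (hx : 0 < x) : Real.sinh x < x * Real.cosh x := by
  have hmono : StrictMonoOn (fun y : ℝ => y * Real.cosh y - Real.sinh y) (Set.Ici 0) := by
    apply strictMonoOn_of_deriv_pos (convex_Ici 0)
    · fun_prop
    · intro y hy
      rw [interior_Ici] at hy
      have hd : HasDerivAt (fun y : ℝ => y * Real.cosh y - Real.sinh y)
          (y * Real.sinh y) y := by
        have := ((hasDerivAt_id y).mul (Real.hasDerivAt_cosh y)).sub (Real.hasDerivAt_sinh y)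
        exact this.congr_deriv (by simp only [id, one_mul]; ring)
      rw [hd.deriv]
      exact mul_pos hy (Real.sinh_pos_iff.2 hy)
  have := hmono (Set.self_mem_Ici) (Set.mem_Ici.2 hx.le) hx
  simp at this
  linarith

/-- For `T > 0` and `t ∈ [0, T]`, `cosh t * sinh T - sinh t * (cosh T - 1) > 0`;
consequently, for `q̃ ≠ 0`, the optimal control
`u*(t) = q̃ (sinh t sinh T - cosh t (cosh T - 1)) / (2 (cosh T - 1) - T sinh T)`
is strictly monotone on `[0, T]`. -/
theorem optimal_control_strictly_monotone (T : ℝ) (hT : 0 < T) :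
    (∀ t ∈ Set.Icc (0 : ℝ) T,
      Real.cosh t * Real.sinh T - Real.sinh t * (Real.cosh T - 1) > 0) ∧
    ∀ qtilde : ℝ, qtilde ≠ 0 →
      StrictMonoOn
        (fun t => qtilde * (Real.sinh t * Real.sinh T - Real.cosh t * (Real.cosh T - 1)) /
          (2 * (Real.cosh T - 1) - T * Real.sinh T)) (Set.Icc 0 T) ∨
      StrictAntiOn
        (fun t => qtilde * (Real.sinh t * Real.sinh T - Real.cosh t * (Real.cosh T - 1)) /
          (2 * (Real.cosh T - 1) - T * Real.sinh T)) (Set.Icc 0 T) := by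
  have hN : ∀ t ∈ Set.Icc (0 : ℝ) T,
      Real.cosh t * Real.sinh T - Real.sinh t * (Real.cosh T - 1) > 0 := by
    intro t ht
    obtain ⟨ht0, htT⟩ := ht
    have key : Real.cosh t * Real.sinh T - Real.sinh t * (Real.cosh T - 1)
        = Real.sinh (T - t) + Real.sinh t := by
      rw [Real.sinh_sub]; ring
    rw [key]
    rcases eq_or_lt_of_le ht0 with h | h
    · have : Real.sinh t = 0 := by rw [← h]; simp
      rw [this]
      have : (0:ℝ) < Real.sinh (T - t) := Real.sinh_pos_iff.2 (by rw [← h]; simpa)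
      linarith
    · have h1 : 0 < Real.sinh t := Real.sinh_pos_iff.2 h
      have h2 : 0 ≤ Real.sinh (T - t) := by
        rw [← Real.sinh_zero]
        exact Real.sinh_le_sinh.2 (by linarith)
      linarith
  refine ⟨hN, ?_⟩
  -- denominator is negative
  have hD : 2 * (Real.cosh T - 1) - T * Real.sinh T < 0 := by
    have hx : 0 < T / 2 := by linarith
    have h1 : Real.cosh T - 1 = 2 * Real.sinh (T / 2) ^ 2 := by
      have := Real.cosh_two_mul (T / 2)
      have h2 := Real.cosh_sq (T / 2)
      rw [show 2 * (T/2) = T by ring] at this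
      nlinarith [Real.sinh_sq (T/2)]
    have h2 : Real.sinh T = 2 * Real.sinh (T / 2) * Real.cosh (T / 2) := by
      have := Real.sinh_two_mul (T / 2)
      rw [show 2 * (T/2) = T by ring] at this
      exact this
    have h3 := aux_sinh_lt_mul_cosh hx
    have hs : 0 < Real.sinh (T / 2) := Real.sinh_pos_iff.2 hx
    rw [h1, h2]
    nlinarith
  intro q hq
  set D := 2 * (Real.cosh T - 1) - T * Real.sinh T with hDdef
  have hderiv : ∀ t : ℝ, HasDerivAt
      (fun t => q * (Real.sinh t * Real.sinh T - Real.cosh t * (Real.cosh T - 1)) / D)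
      (q * (Real.cosh t * Real.sinh T - Real.sinh t * (Real.cosh T - 1)) / D) t := by
    intro t
    have h1 := ((((Real.hasDerivAt_sinh t).mul_const (Real.sinh T)).sub
      ((Real.hasDerivAt_cosh t).mul_const (Real.cosh T - 1))).const_mul q).div_const D
    exact h1
  have hcont : ContinuousOn
      (fun t => q * (Real.sinh t * Real.sinh T - Real.cosh t * (Real.cosh T - 1)) / D)
      (Set.Icc 0 T) := by fun_prop
  rcases lt_or_gt_of_ne hq with hqneg | hqpos
  · left
    apply strictMonoOn_of_deriv_pos (convex_Icc 0 T) hcont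
    intro t ht
    rw [interior_Icc] at ht
    rw [(hderiv t).deriv]
    have hNt := hN t ⟨ht.1.le, ht.2.le⟩
    have : q * (Real.cosh t * Real.sinh T - Real.sinh t * (Real.cosh T - 1)) < 0 :=
      mul_neg_of_neg_of_pos hqneg hNt
    exact div_pos_of_neg_of_neg this hD
  · right
    apply strictAntiOn_of_deriv_neg (convex_Icc 0 T) hcont
    intro t ht
    rw [interior_Icc] at ht
    rw [(hderiv t).deriv]
    have hNt := hN t ⟨ht.1.le, ht.2.le⟩
    have : 0 < q * (Real.cosh t * Real.sinh T - Real.sinh t * (Real.cosh T - 1)) :=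
      mul_pos hqpos hNt
    exact div_neg_of_pos_of_neg this hD
end

section
/- There exists a constant C_u > 0 such that for every real T ≥ 1, one has T·(cosh(T) − 1) ≤ C_u·(T·sinh(T) − 2·(cosh(T) − 1)); consequently, for T ≥ 1 the optimal control of the double-integrator problem satisfies |u*(t)| ≤ C_u·|q̃|/T for all t ∈ [0, T]. -/
open Real

private lemma aux_cube (x : ℝ) (hx : 0 ≤ x) :
    x ^ 3 / 3 ≤ x * Real.cosh x - Real.sinh x := by
  set f : ℝ → ℝ := fun y => y * Real.cosh y - Real.sinh y - y ^ 3 / 3 with hf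
  have hderiv : ∀ y : ℝ, HasDerivAt f (y * (Real.sinh y - y)) y := by
    intro y
    have h1 : HasDerivAt (fun y : ℝ => y * Real.cosh y)
        (1 * Real.cosh y + y * Real.sinh y) y :=
      (hasDerivAt_id y).mul (Real.hasDerivAt_cosh y)
    have h2 : HasDerivAt (fun y : ℝ => y ^ 3 / 3) (3 * y ^ 2 / 3) y :=
      ((hasDerivAt_pow 3 y).div_const 3).congr_deriv (by ring)
    have := (h1.sub (Real.hasDerivAt_sinh y)).sub h2
    exact this.congr_deriv (by ring)
  have hmono : MonotoneOn f (Set.Ici (0 : ℝ)) := by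
    apply monotoneOn_of_deriv_nonneg (convex_Ici 0)
      (Continuous.continuousOn (by fun_prop))
    · intro y _
      exact (hderiv y).differentiableAt.differentiableWithinAt
    · intro y hy
      rw [(hderiv y).deriv]
      have hy' : 0 < y := by simpa using hy
      have := Real.self_le_sinh_iff.mpr hy'.le
      nlinarith
  have h0 : f 0 = 0 := by simp [hf]
  have := hmono (Set.self_mem_Ici) (Set.mem_Ici.mpr hx) hx
  rw [h0] at this
  simp only [hf] at this
  linarith

private lemma aux_D (T : ℝ) (hT : 0 ≤ T) :
    T ^ 4 / 12 ≤ T * Real.sinh T - 2 * (Real.cosh T - 1) := by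
  have hs : Real.sinh T = 2 * Real.sinh (T / 2) * Real.cosh (T / 2) := by
    have := Real.sinh_two_mul (T / 2)
    rw [show (2 : ℝ) * (T / 2) = T by ring] at this
    linarith
  have hc : Real.cosh T = 1 + 2 * Real.sinh (T / 2) ^ 2 := by
    have := Real.cosh_two_mul (T / 2)
    have hsq := Real.cosh_sq (T / 2)
    rw [show (2 : ℝ) * (T / 2) = T by ring] at this
    linarith
  have h2 : 0 ≤ T / 2 := by linarith
  have hcube := aux_cube (T / 2) h2
  have hsinh : T / 2 ≤ Real.sinh (T / 2) := Real.self_le_sinh_iff.mpr h2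
  have hnn : 0 ≤ (T / 2) ^ 3 / 3 := by positivity
  have key : 4 * ((T / 2) * ((T / 2) ^ 3 / 3)) ≤
      4 * (Real.sinh (T / 2) * ((T / 2) * Real.cosh (T / 2) - Real.sinh (T / 2))) := by
    have : (T / 2) * ((T / 2) ^ 3 / 3) ≤
        Real.sinh (T / 2) * ((T / 2) * Real.cosh (T / 2) - Real.sinh (T / 2)) :=
      mul_le_mul hsinh hcube hnn (le_trans h2 hsinh)
    linarith
  rw [hs, hc]
  nlinarith [key]

private lemma aux_main (T : ℝ) (hT : 1 ≤ T) :
    T * (Real.cosh T - 1) ≤ 3000 * (T * Real.sinh T - 2 * (Real.cosh T - 1)) := by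
  have hT0 : (0 : ℝ) ≤ T := by linarith
  have hD : T ^ 4 / 12 ≤ T * Real.sinh T - 2 * (Real.cosh T - 1) := aux_D T hT0
  have hcs : Real.cosh T - Real.sinh T = Real.exp (-T) := Real.cosh_sub_sinh T
  have hexpneg : Real.exp (-T) ≤ 1 := Real.exp_le_one_iff.mpr (by linarith)
  have hsinh0 : 0 ≤ Real.sinh T := Real.sinh_nonneg_iff.mpr hT0
  rcases le_or_gt T 4 with h4 | h4
  · -- 1 ≤ T ≤ 4 : numeric bound
    have hcosh : Real.cosh T ≤ Real.exp T := by
      have h1 := Real.cosh_eq T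
      have h2 : Real.exp (-T) ≤ Real.exp T := Real.exp_le_exp.mpr (by linarith)
      linarith
    have hexp4 : Real.exp T ≤ Real.exp 1 ^ 4 := by
      calc Real.exp T ≤ Real.exp 4 := Real.exp_le_exp.mpr h4
        _ = Real.exp 1 ^ 4 := by rw [← Real.exp_nat_mul]; norm_num
    have he : Real.exp 1 < 2.7182818286 := Real.exp_one_lt_d9
    have hepos : 0 < Real.exp 1 := Real.exp_pos 1
    have hcosh4 : Real.cosh T ≤ 55 := by
      have h4' : Real.exp 1 ^ 4 ≤ 2.7182818286 ^ 4 :=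
        pow_le_pow_left₀ hepos.le he.le 4
      nlinarith
    have hD1 : (1 : ℝ) / 12 ≤ T * Real.sinh T - 2 * (Real.cosh T - 1) := by
      have h14 : (1 : ℝ) ≤ T ^ 4 := by
        have := pow_le_pow_left₀ zero_le_one hT 4
        simpa using this
      linarith
    nlinarith
  · -- T ≥ 4
    have h1 : Real.cosh T - 1 ≤ Real.sinh T := by nlinarith [Real.exp_pos (-T)]
    nlinarith [mul_nonneg (by linarith : (0:ℝ) ≤ T - 4) hsinh0]

/-- There exists `C_u > 0` such that for every `T ≥ 1`,
`T (cosh T - 1) ≤ C_u (T sinh T - 2 (cosh T - 1))`; consequently, for `T ≥ 1` the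
optimal control `u*(t) = q̃ (sinh t sinh T - cosh t (cosh T - 1)) / (2 (cosh T - 1) - T sinh T)`
satisfies `|u*(t)| ≤ C_u |q̃| / T` on `[0, T]`. -/
theorem optimal_control_hyperbolic_bound :
    ∃ C : ℝ, 0 < C ∧ ∀ T : ℝ, 1 ≤ T →
      T * (Real.cosh T - 1) ≤ C * (T * Real.sinh T - 2 * (Real.cosh T - 1)) ∧
      ∀ qtilde : ℝ, ∀ t ∈ Set.Icc (0 : ℝ) T,
        |qtilde * (Real.sinh t * Real.sinh T - Real.cosh t * (Real.cosh T - 1)) /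
          (2 * (Real.cosh T - 1) - T * Real.sinh T)| ≤ C * |qtilde| / T := by
  refine ⟨3000, by norm_num, fun T hT => ⟨aux_main T hT, ?_⟩⟩
  intro q t ht
  obtain ⟨ht0, htT⟩ := ht
  have hT0 : (0 : ℝ) < T := lt_of_lt_of_le zero_lt_one hT
  -- half-angle identities
  have half : ∀ x : ℝ, Real.sinh x = 2 * Real.sinh (x / 2) * Real.cosh (x / 2) ∧
      Real.cosh x = 1 + 2 * Real.sinh (x / 2) ^ 2 := by
    intro x
    have h1 := Real.sinh_two_mul (x / 2)
    have h2 := Real.cosh_two_mul (x / 2)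
    have h3 := Real.cosh_sq (x / 2)
    rw [show (2 : ℝ) * (x / 2) = x by ring] at h1 h2
    constructor <;> linarith
  obtain ⟨hst, hct⟩ := half t
  obtain ⟨hsT, hcT⟩ := half T
  set sa := Real.sinh (t / 2) with hsa_def
  set ca := Real.cosh (t / 2) with hca_def
  set sb := Real.sinh (T / 2) with hsb_def
  set cb := Real.cosh (T / 2) with hcb_def
  have hsa : 0 ≤ sa := Real.sinh_nonneg_iff.mpr (by linarith)
  have hsb : 0 ≤ sb := Real.sinh_nonneg_iff.mpr (by linarith)
  have hca : 0 < ca := Real.cosh_pos _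
  have hcb : 0 < cb := Real.cosh_pos _
  have hdiff : 0 ≤ sb * ca - cb * sa := by
    have h1 := Real.sinh_sub (T / 2) (t / 2)
    have h2 : 0 ≤ Real.sinh (T / 2 - t / 2) := Real.sinh_nonneg_iff.mpr (by linarith)
    rw [h1] at h2
    linarith
  have hcdiff : 0 ≤ cb * ca - sb * sa := by
    have h1 := Real.cosh_sub (T / 2) (t / 2)
    have h2 : 0 < Real.cosh (T / 2 - t / 2) := Real.cosh_pos _
    rw [h1] at h2
    linarith
  have hca2 : ca ^ 2 = 1 + sa ^ 2 := by
    have := Real.cosh_sq (t / 2); linarith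
  -- numerator bound
  have hN : |Real.sinh t * Real.sinh T - Real.cosh t * (Real.cosh T - 1)| ≤
      Real.cosh T - 1 := by
    rw [abs_le]
    constructor
    · rw [hst, hct, hsT, hcT]
      nlinarith [mul_nonneg (mul_nonneg hsa hsb) hcdiff]
    · rw [hst, hct, hsT, hcT]
      nlinarith [mul_nonneg (mul_nonneg hca.le hsb) hdiff]
  -- denominator
  have hD : T ^ 4 / 12 ≤ T * Real.sinh T - 2 * (Real.cosh T - 1) := aux_D T hT0.le
  have hT4 : (1 : ℝ) ≤ T ^ 4 := by
    have := pow_le_pow_left₀ zero_le_one hT 4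
    simpa using this
  have hDpos : 0 < T * Real.sinh T - 2 * (Real.cosh T - 1) := by linarith
  have hden : |2 * (Real.cosh T - 1) - T * Real.sinh T| =
      T * Real.sinh T - 2 * (Real.cosh T - 1) := by
    rw [abs_of_nonpos (by linarith)]; ring
  rw [abs_div, abs_mul, hden, div_le_div_iff₀ hDpos hT0]
  have hmain := aux_main T hT
  nlinarith [mul_le_mul_of_nonneg_left hN (mul_nonneg (abs_nonneg q) hT0.le),
    mul_le_mul_of_nonneg_left hmain (abs_nonneg q), abs_nonneg q,
    mul_nonneg (abs_nonneg q) (le_of_lt hT0)]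
end

section
/- Explicit solution of the optimality system for v₀ = v_T = 0: let T > 0, q₀, q̃ ∈ ℝ, D := 2·(cosh(T) − 1) − T·sinh(T) ≠ 0, and define x : ℝ → ℝ⁴ by x₁(t) = q₀ + q̃·((cosh(t) − 1) + (cosh(T) − cosh(T − t)) − t·sinh(T))/D, x₂(t) = q̃·(sinh(t) + sinh(T − t) − sinh(T))/D, x₃(t) = q̃·sinh(T)/D, x₄(t) = q̃·(cosh(t)·(cosh(T) − 1) − sinh(t)·sinh(T))/D. Then x is differentiable and satisfies x'(t) = H·x(t) for all t ∈ ℝ, where H is the 4×4 real matrix with rows (0, 1, 0, 0), (0, 0, 0, −1), (0, 0, 0, 0), (0, −1, −1, 0); moreover x₁(0) = q₀, x₁(T) = q₀ + q̃, and x₂(0) = x₂(T) = 0. -/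
lemma sinh_lt_mul_cosh {s : ℝ} (hs : 0 < s) : Real.sinh s < s * Real.cosh s := by
  have key : StrictMonoOn (fun u : ℝ => u * Real.cosh u - Real.sinh u) (Set.Ici 0) := by
    apply strictMonoOn_of_deriv_pos (convex_Ici 0)
    · fun_prop
    · intro u hu
      simp only [interior_Ici, Set.mem_Ioi] at hu
      have h1 : HasDerivAt (fun u : ℝ => u * Real.cosh u - Real.sinh u)
          (1 * Real.cosh u + u * Real.sinh u - Real.cosh u) u :=
        ((hasDerivAt_id u).mul (Real.hasDerivAt_cosh u)).sub (Real.hasDerivAt_sinh u)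
      rw [h1.deriv]
      have := Real.sinh_pos_iff.mpr hu
      nlinarith
  have := key (Set.self_mem_Ici) (Set.mem_Ici.mpr hs.le) hs
  simpa using this

/-- Explicit solution of the optimality system for `v₀ = v_T = 0`: for `T > 0`
and `q₀, q̃ ∈ ℝ`, with `D = 2 (cosh T - 1) - T sinh T ≠ 0`, the curve `x : ℝ → ℝ⁴`
with components
`x₁ t = q₀ + q̃ ((cosh t - 1) + (cosh T - cosh (T - t)) - t sinh T) / D`,
`x₂ t = q̃ (sinh t + sinh (T - t) - sinh T) / D`,
`x₃ t = q̃ sinh T / D`,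
`x₄ t = q̃ (cosh t (cosh T - 1) - sinh t sinh T) / D`
solves `x' = H x` and satisfies the boundary conditions
`x₁ 0 = q₀`, `x₁ T = q₀ + q̃`, `x₂ 0 = x₂ T = 0`. -/
theorem optimality_system_explicit_solution (T : ℝ) (hT : 0 < T) (q₀ qtilde : ℝ)
    (H : Matrix (Fin 4) (Fin 4) ℝ)
    (hH : H = !![0, 1, 0, 0; 0, 0, 0, -1; 0, 0, 0, 0; 0, -1, -1, 0])
    (D : ℝ) (hD : D = 2 * (Real.cosh T - 1) - T * Real.sinh T)
    (x : ℝ → Fin 4 → ℝ)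
    (hx : x = fun t =>
      ![q₀ + qtilde * ((Real.cosh t - 1) + (Real.cosh T - Real.cosh (T - t)) -
          t * Real.sinh T) / D,
        qtilde * (Real.sinh t + Real.sinh (T - t) - Real.sinh T) / D,
        qtilde * Real.sinh T / D,
        qtilde * (Real.cosh t * (Real.cosh T - 1) - Real.sinh t * Real.sinh T) / D]) :
    D ≠ 0 ∧
      (∀ t : ℝ, HasDerivAt x (H.mulVec (x t)) t) ∧
      x 0 0 = q₀ ∧ x T 0 = q₀ + qtilde ∧ x 0 1 = 0 ∧ x T 1 = 0 := by
  have hDneg : D < 0 := by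
    have h2 : (0:ℝ) < T / 2 := by linarith
    have hs := Real.sinh_pos_iff.mpr h2
    have hlt := sinh_lt_mul_cosh h2
    have hcosh : Real.cosh T = 2 * Real.sinh (T/2) ^ 2 + 1 := by
      have h := Real.cosh_two_mul (T/2)
      have hsq := Real.cosh_sq (T/2)
      rw [show 2 * (T/2) = T by ring] at h
      nlinarith
    have hsinh : Real.sinh T = 2 * Real.sinh (T/2) * Real.cosh (T/2) := by
      have h := Real.sinh_two_mul (T/2)
      rw [show 2 * (T/2) = T by ring] at h
      linarith
    rw [hD, hcosh, hsinh]
    nlinarith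
  have hD0 : D ≠ 0 := ne_of_lt hDneg
  subst hx hH
  refine ⟨hD0, ?_, ?_, ?_, ?_, ?_⟩
  · intro t
    rw [hasDerivAt_pi]
    have hTt : HasDerivAt (fun t : ℝ => T - t) (0 - 1) t :=
      (hasDerivAt_const t T).sub (hasDerivAt_id t)
    have hcTt := hTt.cosh
    have hsTt := hTt.sinh
    have d0 : HasDerivAt (fun t : ℝ => q₀ + qtilde * ((Real.cosh t - 1) +
        (Real.cosh T - Real.cosh (T - t)) - t * Real.sinh T) / D)
        (qtilde * ((Real.sinh t + (0 - Real.sinh (T - t) * (0 - 1))) -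
          1 * Real.sinh T) / D) t := by
      exact ((((((Real.hasDerivAt_cosh t).sub_const 1).add
        ((hasDerivAt_const t (Real.cosh T)).sub hcTt)).sub
        ((hasDerivAt_id t).mul_const (Real.sinh T))).const_mul qtilde).div_const D).const_add q₀
    have d1 : HasDerivAt (fun t : ℝ =>
        qtilde * (Real.sinh t + Real.sinh (T - t) - Real.sinh T) / D)
        (qtilde * (Real.cosh t + Real.cosh (T - t) * (0 - 1)) / D) t := by
      exact ((((Real.hasDerivAt_sinh t).add hsTt).sub_const (Real.sinh T)).const_mul
        qtilde).div_const D
    have d2 : HasDerivAt (fun _ : ℝ => qtilde * Real.sinh T / D) 0 t :=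
      hasDerivAt_const t _
    have d3 : HasDerivAt (fun t : ℝ =>
        qtilde * (Real.cosh t * (Real.cosh T - 1) - Real.sinh t * Real.sinh T) / D)
        (qtilde * (Real.sinh t * (Real.cosh T - 1) - Real.cosh t * Real.sinh T) / D) t := by
      exact ((((Real.hasDerivAt_cosh t).mul_const (Real.cosh T - 1)).sub
        ((Real.hasDerivAt_sinh t).mul_const (Real.sinh T))).const_mul qtilde).div_const D
    have e2 : (⟨2, by norm_num⟩ : Fin 4) = 2 := rfl
    have e3 : (⟨3, by norm_num⟩ : Fin 4) = 3 := rfl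
    intro i
    fin_cases i <;> simp only [e2, e3] <;>
      simp only [Matrix.cons_mulVec, Matrix.cons_dotProduct, Matrix.dotProduct_of_isEmpty,
        Matrix.cons_val_zero, Matrix.cons_val_one, Matrix.head_cons, Fin.isValue,
        Matrix.cons_val_two, Matrix.tail_cons, Matrix.cons_val_three, Fin.mk_one,
        Matrix.cons_val_fin_one, Matrix.cons_val', Matrix.empty_val',
        Matrix.cons_val_succ, Fin.mk_zero]
    · convert d0 using 1
      rfl
      rfl
      ring
    · convert d1 using 1
      rfl
      rfl
      rw [Real.cosh_sub]; ring
    · convert d2 using 1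
      rfl
      rfl
      ring
    · convert d3 using 1
      rfl
      rfl
      rw [Real.sinh_sub]; ring
  · simp
  · simp only [Matrix.cons_val_zero, sub_self, Real.cosh_zero]
    field_simp
    rw [hD]; ring
  · simp
  · simp [sub_self, Real.sinh_zero]
end
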